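/- Under Assumption 2 (S nonempty, each deg_Y gᵢ = mᵢ even, and S∞ = {x ∈ ℝⁿ : g_{1m₁}(x) ≥ 0, …, g_{sm_s}(x) ≥ 0} ⊆ B where B is the closed ball of radius √N), the set S̃ = {(x,y,z) ∈ ℝ^{n+2} : g̃₁(x,y,z) ≥ 0, …, g̃_s(x,y,z) ≥ 0, q̃(y,z) = 1, z ≥ 0} is compact. -/

import Mathlib

set_option maxHeartbeats 800000

/-- The homogenization `q̃(Y,Z)` of a univariate polynomial, as a function. -/
noncomputable def qhom (q : Polynomial ℝ) (y z : ℝ) : ℝ :=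
  ∑ k ∈ Finset.range (q.natDegree + 1), q.coeff k * y ^ k * z ^ (q.natDegree - k)

/-- The homogenization with respect to `Y` of `g ∈ ℝ[X₁,…,Xₙ][Y]`, as a function. -/
noncomputable def fhom {n : ℕ} (g : Polynomial (MvPolynomial (Fin n) ℝ))
    (x : Fin n → ℝ) (y z : ℝ) : ℝ :=
  ∑ k ∈ Finset.range (g.natDegree + 1),
    MvPolynomial.eval x (g.coeff k) * y ^ k * z ^ (g.natDegree - k)

/-- Membership in the quadratic module generated by `g₁, …, g_s`:
`p = σ₀ + σ₁ g₁ + ⋯ + σ_s g_s` with all `σᵢ` sums of squares. -/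
def QuadMod {R : Type*} [CommRing R] {s : ℕ} (g : Fin s → R) (p : R) : Prop :=
  ∃ σ₀ : R, ∃ σ : Fin s → R,
    IsSumSq σ₀ ∧ (∀ i, IsSumSq (σ i)) ∧ p = σ₀ + ∑ i, σ i * g i

/-- The set `S̃ = {(x,y,z) : g̃ᵢ(x,y,z) ≥ 0 ∀i, q̃(y,z) = 1, z ≥ 0}`. -/
def Stilde {n s : ℕ} (g : Fin s → Polynomial (MvPolynomial (Fin n) ℝ))
    (q : Polynomial ℝ) : Set ((Fin n → ℝ) × ℝ × ℝ) :=
  {p | (∀ i, 0 ≤ fhom (g i) p.1 p.2.1 p.2.2) ∧ qhom q p.2.1 p.2.2 = 1 ∧ 0 ≤ p.2.2}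


/-- Generic homogeneous-sum lemma: value at `z = 0`. -/
lemma hsum_zero (d : ℕ) (c : ℕ → ℝ) (y : ℝ) :
    ∑ k ∈ Finset.range (d + 1), c k * y ^ k * (0 : ℝ) ^ (d - k) = c d * y ^ d := by
  rw [Finset.sum_range_succ, Nat.sub_self, pow_zero, mul_one, Finset.sum_eq_zero, zero_add]
  intro k hk
  rw [Finset.mem_range] at hk
  rw [zero_pow (by omega : d - k ≠ 0), mul_zero]

/-- Generic homogeneous-sum lemma: factorization for `z ≠ 0`. -/
lemma hsum_factor (d : ℕ) (c : ℕ → ℝ) (y z : ℝ) (hz : z ≠ 0) :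
    ∑ k ∈ Finset.range (d + 1), c k * y ^ k * z ^ (d - k)
      = z ^ d * ∑ k ∈ Finset.range (d + 1), c k * (y / z) ^ k := by
  rw [Finset.mul_sum]
  refine Finset.sum_congr rfl fun k hk => ?_
  rw [Finset.mem_range] at hk
  have h1 : (z : ℝ) ^ d = z ^ k * z ^ (d - k) := by rw [← pow_add]; congr 1; omega
  rw [div_pow, h1]
  field_simp

/-- Generic homogeneous-sum lemma: homogeneity of degree `d`. -/
lemma hsum_homog (d : ℕ) (c : ℕ → ℝ) (t y z : ℝ) :
    ∑ k ∈ Finset.range (d + 1), c k * (t * y) ^ k * (t * z) ^ (d - k)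
      = t ^ d * ∑ k ∈ Finset.range (d + 1), c k * y ^ k * z ^ (d - k) := by
  rw [Finset.mul_sum]
  refine Finset.sum_congr rfl fun k hk => ?_
  rw [Finset.mem_range] at hk
  have h1 : (t : ℝ) ^ d = t ^ k * t ^ (d - k) := by rw [← pow_add]; congr 1; omega
  rw [mul_pow, mul_pow, h1]
  ring

lemma isSumSq_map {R S : Type*} [CommRing R] [CommRing S] (f : R →+* S) {a : R}
    (h : IsSumSq a) : IsSumSq (f a) := by
  induction h with
  | zero => simpa using IsSumSq.zero
  | @sq_add b T hT ih => simpa [map_add, map_mul] using IsSumSq.sq_add (f b) ih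

lemma q_lc_pos (q : Polynomial ℝ) (h0 : 0 < q.natDegree) (hq : ∀ y : ℝ, 0 < q.eval y) :
    0 < q.leadingCoeff := by
  by_contra h
  push_neg at h
  have hd : 0 < q.degree := Polynomial.natDegree_pos_iff_degree_pos.mp h0
  have ht := Polynomial.tendsto_atBot_of_leadingCoeff_nonpos q hd h
  obtain ⟨x, hx⟩ := (ht.eventually (Filter.eventually_lt_atBot (0 : ℝ))).exists
  exact absurd (hq x) (not_lt.mpr hx.le)

lemma q_deg_even (q : Polynomial ℝ) (h0 : 0 < q.natDegree) (hq : ∀ y : ℝ, 0 < q.eval y) :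
    Even q.natDegree := by
  by_contra hodd
  rw [Nat.not_even_iff_odd] at hodd
  set P := q.comp (-Polynomial.X) with hP
  have hXdeg : (-Polynomial.X : Polynomial ℝ).natDegree = 1 := by simp
  have hdeg : P.natDegree = q.natDegree := by
    rw [hP, Polynomial.natDegree_comp, hXdeg, mul_one]
  have hlc : P.leadingCoeff ≤ 0 := by
    rw [hP, Polynomial.leadingCoeff_comp (by rw [hXdeg]; norm_num)]
    have : (-Polynomial.X : Polynomial ℝ).leadingCoeff = -1 := by
      simp [Polynomial.leadingCoeff_neg]
    rw [this, hodd.neg_one_pow]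
    nlinarith [q_lc_pos q h0 hq]
  have hd : 0 < P.degree := Polynomial.natDegree_pos_iff_degree_pos.mp (by omega)
  have ht := Polynomial.tendsto_atBot_of_leadingCoeff_nonpos P hd hlc
  obtain ⟨x, hx⟩ := (ht.eventually (Filter.eventually_lt_atBot (0 : ℝ))).exists
  have : P.eval x = q.eval (-x) := by simp [hP]
  rw [this] at hx
  exact absurd (hq (-x)) (not_lt.mpr hx.le)

theorem stmt_10 (n s : ℕ) (g : Fin s → Polynomial (MvPolynomial (Fin n) ℝ))
    (N : ℝ) (hN : 0 < N)
    (harch : QuadMod g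
      (Polynomial.C (MvPolynomial.C N - ∑ j, MvPolynomial.X j ^ 2)))
    (hSne : ∃ (x : Fin n → ℝ) (y : ℝ), ∀ i,
      0 ≤ Polynomial.eval₂ (MvPolynomial.eval x) y (g i))
    (heven : ∀ i, Even (g i).natDegree)
    (hSinf : ∀ x : Fin n → ℝ,
      (∀ i, 0 ≤ MvPolynomial.eval x (g i).leadingCoeff) → ∑ j, x j ^ 2 ≤ N)
    (q : Polynomial ℝ) (h0 : 0 < q.natDegree) (hq : ∀ y : ℝ, 0 < q.eval y) :
    IsCompact (Stilde g q) := by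

  classical
  have hlc := q_lc_pos q h0 hq
  have hqeven := q_deg_even q h0 hq
  set d := q.natDegree with hd
  -- continuity of fhom and qhom as functions of the full tuple
  have hcontf : ∀ h : Polynomial (MvPolynomial (Fin n) ℝ),
      Continuous fun p : (Fin n → ℝ) × ℝ × ℝ => fhom h p.1 p.2.1 p.2.2 := by
    intro h
    unfold fhom
    apply continuous_finset_sum
    intro k _
    exact (((MvPolynomial.continuous_eval _).comp continuous_fst).mul
      ((continuous_fst.comp continuous_snd).pow k)).mul
      ((continuous_snd.comp continuous_snd).pow _)
  have hcontq : Continuous fun v : ℝ × ℝ => qhom q v.1 v.2 := by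
    unfold qhom
    apply continuous_finset_sum
    intro k _
    exact ((continuous_const.mul (continuous_fst.pow k)).mul (continuous_snd.pow _))
  -- positivity of qhom on the closed half-circle
  have hqpos : ∀ y z : ℝ, 0 ≤ z → y ^ 2 + z ^ 2 = 1 → 0 < qhom q y z := by
    intro y z hz hcirc
    rcases eq_or_lt_of_le hz with hz0 | hzpos
    · have hz0' : z = 0 := hz0.symm
      subst hz0'
      have hy : y ≠ 0 := by intro h; rw [h] at hcirc; norm_num at hcirc
      rw [qhom, hsum_zero]
      exact mul_pos hlc (hqeven.pow_pos hy)
    · rw [qhom, hsum_factor _ _ _ _ hzpos.ne', ← Polynomial.eval_eq_sum_range]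
      exact mul_pos (pow_pos hzpos d) (hq _)
  -- minimum of qhom on the half-circle
  set K : Set (ℝ × ℝ) := {v | v.1 ^ 2 + v.2 ^ 2 = 1 ∧ 0 ≤ v.2} with hK
  have hKc : IsCompact K := by
    apply Metric.isCompact_of_isClosed_isBounded
    · exact (isClosed_eq (by continuity) continuous_const).inter
        (isClosed_le continuous_const continuous_snd)
    · apply (Metric.isBounded_closedBall (x := (0 : ℝ × ℝ)) (r := 1)).subset
      rintro ⟨a, b⟩ ⟨h1, h2⟩
      rw [Metric.mem_closedBall, dist_zero_right, Prod.norm_def]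
      simp only [Real.norm_eq_abs]
      have ha : |a| ≤ 1 := by nlinarith [sq_abs a, abs_nonneg a, sq_nonneg b]
      have hb : |b| ≤ 1 := by nlinarith [sq_abs b, abs_nonneg b, sq_nonneg a]
      exact max_le ha hb
  have hKne : K.Nonempty := ⟨(0, 1), by simp [hK]⟩
  obtain ⟨v₀, hv₀K, hv₀min⟩ :=
    hKc.exists_isMinOn hKne (hcontq.continuousOn)
  set ε : ℝ := qhom q v₀.1 v₀.2 with hε
  have hεpos : 0 < ε := hqpos v₀.1 v₀.2 hv₀K.2 hv₀K.1
  set M : ℝ := max 1 (1 / ε) with hM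
  have hM1 : (1 : ℝ) ≤ M := le_max_left _ _
  -- bound on (y,z)
  have hYZ : ∀ y z : ℝ, 0 ≤ z → qhom q y z = 1 → |y| ≤ M ∧ |z| ≤ M := by
    intro y z hz hq1
    set r : ℝ := Real.sqrt (y ^ 2 + z ^ 2) with hr
    have hr2 : r ^ 2 = y ^ 2 + z ^ 2 := Real.sq_sqrt (by positivity)
    have hrpos : 0 < r := by
      rcases lt_or_eq_of_le (Real.sqrt_nonneg (y ^ 2 + z ^ 2)) with h | h
      · exact h
      · exfalso
        have h00 : y ^ 2 + z ^ 2 = 0 := by nlinarith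
        have hy0 : y = 0 := by nlinarith
        have hz0 : z = 0 := by nlinarith
        rw [hy0, hz0, qhom, hsum_zero, zero_pow (by omega : d ≠ 0), mul_zero] at hq1
        norm_num at hq1
    have hmem : (y / r, z / r) ∈ K := by
      rw [hK]
      refine ⟨?_, div_nonneg hz hrpos.le⟩
      show (y / r) ^ 2 + (z / r) ^ 2 = 1
      field_simp
      linarith [hr2]
    have hge : ε ≤ qhom q (y / r) (z / r) := isMinOn_iff.mp hv₀min _ hmem
    have hhom : qhom q y z = r ^ d * qhom q (y / r) (z / r) := by
      have h1 : y = r * (y / r) := by field_simp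
      have h2 : z = r * (z / r) := by field_simp
      conv_lhs => rw [h1, h2]
      rw [qhom, qhom, hsum_homog]
    have hrd : r ^ d * ε ≤ 1 := by
      rw [hq1] at hhom
      nlinarith [pow_pos hrpos d]
    have hrM : r ≤ M := by
      by_contra hcon
      push_neg at hcon
      have h1r : 1 < r := lt_of_le_of_lt hM1 hcon
      have h2 : r ≤ r ^ d := le_self_pow₀ h1r.le (by omega)
      have h3 : 1 / ε < r ^ d := lt_of_lt_of_le (lt_of_le_of_lt (le_max_right _ _) hcon) h2
      have : 1 < r ^ d * ε := by
        rw [div_lt_iff₀ hεpos] at h3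
        linarith [h3]
      linarith
    constructor
    · have : |y| ≤ r := by
        rw [← Real.sqrt_sq_eq_abs]
        exact Real.sqrt_le_sqrt (by nlinarith)
      linarith
    · have : |z| ≤ r := by
        rw [← Real.sqrt_sq_eq_abs]
        exact Real.sqrt_le_sqrt (by nlinarith)
      linarith
  -- bound on x
  have hX : ∀ p ∈ Stilde g q, ∑ j, p.1 j ^ 2 ≤ N := by
    rintro ⟨x, y, z⟩ ⟨hf, hq1, hz⟩
    simp only at hf hq1 hz ⊢
    rcases eq_or_lt_of_le hz with hz0 | hzpos
    · have hz0' : z = 0 := hz0.symm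
      subst hz0'
      have hy : y ≠ 0 := by
        intro h
        rw [h, qhom, hsum_zero, zero_pow (by omega : d ≠ 0), mul_zero] at hq1
        norm_num at hq1
      apply hSinf
      intro i
      have h1 := hf i
      rw [fhom, hsum_zero] at h1
      have hyd : 0 < y ^ (g i).natDegree := (heven i).pow_pos hy
      have : (g i).leadingCoeff = (g i).coeff (g i).natDegree := rfl
      rw [this]
      nlinarith
    · set t : ℝ := y / z with ht
      have hgi : ∀ i, 0 ≤ Polynomial.eval₂ (MvPolynomial.eval x) t (g i) := by
        intro i
        have h1 := hf i
        rw [fhom, hsum_factor _ _ _ _ hzpos.ne',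
          ← Polynomial.eval₂_eq_sum_range] at h1
        nlinarith [pow_pos hzpos (g i).natDegree]
      obtain ⟨σ₀, σ, hσ₀, hσ, heq2⟩ := harch
      have hE := congrArg (Polynomial.eval₂RingHom (MvPolynomial.eval x) t) heq2
      simp only [map_add, map_sum, map_mul, Polynomial.coe_eval₂RingHom,
        Polynomial.eval₂_C, map_sub, MvPolynomial.eval_C, map_pow,
        MvPolynomial.eval_X] at hE
      have h₀ : 0 ≤ Polynomial.eval₂ (MvPolynomial.eval x) t σ₀ := by
        have := isSumSq_map (Polynomial.eval₂RingHom (MvPolynomial.eval x) t) hσ₀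
        rw [Polynomial.coe_eval₂RingHom] at this
        exact this.nonneg
      have hσi : ∀ i, 0 ≤ Polynomial.eval₂ (MvPolynomial.eval x) t (σ i) := by
        intro i
        have := isSumSq_map (Polynomial.eval₂RingHom (MvPolynomial.eval x) t) (hσ i)
        rw [Polynomial.coe_eval₂RingHom] at this
        exact this.nonneg
      have hsum : 0 ≤ Polynomial.eval₂ (MvPolynomial.eval x) t σ₀ +
          ∑ i, Polynomial.eval₂ (MvPolynomial.eval x) t (σ i) *
            Polynomial.eval₂ (MvPolynomial.eval x) t (g i) :=
        add_nonneg h₀ (Finset.sum_nonneg fun i _ => mul_nonneg (hσi i) (hgi i))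
      linarith [hE ▸ hsum]
  -- conclude: closed and bounded
  apply Metric.isCompact_of_isClosed_isBounded
  · have hset : Stilde g q =
        (⋂ i, {p : (Fin n → ℝ) × ℝ × ℝ | 0 ≤ fhom (g i) p.1 p.2.1 p.2.2}) ∩
        ({p : (Fin n → ℝ) × ℝ × ℝ | qhom q p.2.1 p.2.2 = 1} ∩
         {p : (Fin n → ℝ) × ℝ × ℝ | 0 ≤ p.2.2}) := by
      ext p
      simp only [Stilde, Set.mem_setOf_eq, Set.mem_inter_iff, Set.mem_iInter]
    rw [hset]
    exact (isClosed_iInter fun i =>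
        isClosed_le continuous_const (hcontf (g i))).inter
      ((isClosed_eq (hcontq.comp continuous_snd) continuous_const).inter
        (isClosed_le continuous_const (continuous_snd.comp continuous_snd)))
  · apply (Metric.isBounded_closedBall
      (x := (0 : (Fin n → ℝ) × ℝ × ℝ)) (r := max (Real.sqrt N) M)).subset
    intro p hp
    obtain ⟨hf, hq1, hz⟩ := hp
    rw [Metric.mem_closedBall, dist_zero_right, Prod.norm_def, Prod.norm_def]
    have hx : ‖p.1‖ ≤ Real.sqrt N := by
      rw [pi_norm_le_iff_of_nonneg (Real.sqrt_nonneg N)]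
      intro j
      rw [Real.norm_eq_abs, ← Real.sqrt_sq_eq_abs]
      apply Real.sqrt_le_sqrt
      calc p.1 j ^ 2 ≤ ∑ j', p.1 j' ^ 2 :=
            Finset.single_le_sum (f := fun j' => p.1 j' ^ 2) (fun j' _ => sq_nonneg _) (Finset.mem_univ j)
        _ ≤ N := hX p ⟨hf, hq1, hz⟩
    obtain ⟨hy, hz'⟩ := hYZ p.2.1 p.2.2 hz hq1
    rw [Real.norm_eq_abs, Real.norm_eq_abs]
    refine max_le (hx.trans (le_max_left _ _)) (max_le ?_ ?_)
    · exact hy.trans (le_max_right _ _)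
    · exact hz'.trans (le_max_right _ _)
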